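/- arXiv:2407.03337 — 5 statements merged into one kernel-verified Lean document; each statement's English description precedes it below -/
import Mathlib

section
/- Under the same hypotheses, the AT iteration sequence satisfies ‖s_{m+1} − s‖ ≤ ζ³‖s_m − s‖ for all m, and consequently ‖s_m − s‖ ≤ ζ^{3m}‖s_0 − s‖. -/
private lemma comb_sub {Q : Type*} [NormedAddCommGroup Q] [NormedSpace ℝ Q]
    (c : ℝ) (x y s : Q) :
    (1 - c) • x + c • y - s = (1 - c) • (x - s) + c • (y - s) := by
  module

private lemma AT_half_sub {Q : Type*} [NormedAddCommGroup Q] [NormedSpace ℝ Q]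
    (x y s : Q) :
    (1/2 : ℝ) • x + (1/2 : ℝ) • y - s = (1/2 : ℝ) • (x - s) + (1/2 : ℝ) • (y - s) := by
  module

private lemma comb_norm {Q : Type*} [NormedAddCommGroup Q] [NormedSpace ℝ Q]
    {ζ c : ℝ} (hζ0 : 0 ≤ ζ) (hζ1 : ζ ≤ 1) (hc0 : 0 ≤ c) (hc1 : c ≤ 1)
    {x y s : Q} (hy : ‖y - s‖ ≤ ζ * ‖x - s‖) :
    ‖(1 - c) • x + c • y - s‖ ≤ ‖x - s‖ := by
  rw [comb_sub]
  calc ‖(1 - c) • (x - s) + c • (y - s)‖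
      ≤ ‖(1 - c) • (x - s)‖ + ‖c • (y - s)‖ := norm_add_le _ _
    _ = (1 - c) * ‖x - s‖ + c * ‖y - s‖ := by
        rw [norm_smul, norm_smul, Real.norm_eq_abs, Real.norm_eq_abs,
          abs_of_nonneg (by linarith), abs_of_nonneg hc0]
    _ ≤ (1 - c) * ‖x - s‖ + c * (ζ * ‖x - s‖) := by nlinarith
    _ ≤ ‖x - s‖ := by nlinarith [norm_nonneg (x - s), mul_nonneg (mul_nonneg hc0 (sub_nonneg.2 hζ1)) (norm_nonneg (x - s))]

theorem AT_iteration_main_estimate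
    {Q : Type*} [NormedAddCommGroup Q] [NormedSpace ℝ Q] [CompleteSpace Q]
    (P : Set Q) (hP : P.Nonempty) (hPc : IsClosed P) (hPconv : Convex ℝ P)
    (R : Q → Q) (hmap : Set.MapsTo R P P)
    (ζ L : ℝ) (hζ0 : 0 < ζ) (hζ1 : ζ < 1) (hL : 0 ≤ L)
    (hweak : ∀ p q, p ∈ P → q ∈ P → ‖R p - R q‖ ≤ ζ * ‖p - q‖ + L * ‖p - R p‖)
    (s : Q) (hsP : s ∈ P) (hfix : R s = s)
    (a : ℕ → ℝ) (ha : ∀ m, a m ∈ Set.Ioo (0 : ℝ) 1)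
    (s_ b_ : ℕ → Q) (hs0 : s_ 0 ∈ P)
    (hb : ∀ m, b_ m = (1/2 : ℝ) • R (R (s_ m)) +
      (1/2 : ℝ) • R (R ((1 - a m) • s_ m + (a m) • R (s_ m))))
    (hs : ∀ m, s_ (m + 1) = R ((1 - a m) • b_ m + (a m) • R (b_ m))) :
    (∀ m, ‖s_ (m + 1) - s‖ ≤ ζ ^ 3 * ‖s_ m - s‖) ∧
    (∀ m, ‖s_ m - s‖ ≤ ζ ^ (3 * m) * ‖s_ 0 - s‖) := by
  -- contraction toward the fixed point
  have key : ∀ q ∈ P, ‖R q - s‖ ≤ ζ * ‖q - s‖ := by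
    intro q hq
    have h := hweak s q hsP hq
    rw [hfix, sub_self, norm_zero, mul_zero, add_zero, norm_sub_rev s q] at h
    rw [norm_sub_rev]
    exact h
  -- convex combination membership helper
  have memc : ∀ (c : ℝ), c ∈ Set.Ioo (0:ℝ) 1 → ∀ x ∈ P, ∀ y ∈ P,
      (1 - c) • x + c • y ∈ P := by
    intro c hc x hx y hy
    exact hPconv hx hy (by linarith [hc.2]) (le_of_lt hc.1) (by ring)
  have memh : ∀ x ∈ P, ∀ y ∈ P, (1/2 : ℝ) • x + (1/2 : ℝ) • y ∈ P := by
    intro x hx y hy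
    exact hPconv hx hy (by norm_num) (by norm_num) (by norm_num)
  -- s_ m ∈ P for all m
  have hmem : ∀ m, s_ m ∈ P := by
    intro m
    induction m with
    | zero => exact hs0
    | succ n ih =>
      rw [hs n]
      have hu := memc _ (ha n) _ ih _ (hmap ih)
      have hbP : b_ n ∈ P := by
        rw [hb n]
        exact memh _ (hmap (hmap ih)) _ (hmap (hmap hu))
      exact hmap (memc _ (ha n) _ hbP _ (hmap hbP))
  have hζ0' : (0:ℝ) ≤ ζ := le_of_lt hζ0
  have hζ1' : ζ ≤ 1 := le_of_lt hζ1
  -- main one-step estimate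
  have main : ∀ m, ‖s_ (m + 1) - s‖ ≤ ζ ^ 3 * ‖s_ m - s‖ := by
    intro m
    have hc := ha m
    have hxP := hmem m
    have huP := memc _ hc _ hxP _ (hmap hxP)
    have hbP : b_ m ∈ P := by
      rw [hb m]; exact memh _ (hmap (hmap hxP)) _ (hmap (hmap huP))
    -- ‖u - s‖ ≤ ‖s_m - s‖
    have hu : ‖(1 - a m) • s_ m + (a m) • R (s_ m) - s‖ ≤ ‖s_ m - s‖ :=
      comb_norm hζ0' hζ1' (le_of_lt hc.1) (le_of_lt hc.2) (key _ hxP)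
    -- ‖b_m - s‖ ≤ ζ^2 ‖s_m - s‖
    have hRRx : ‖R (R (s_ m)) - s‖ ≤ ζ^2 * ‖s_ m - s‖ := by
      have h1 := key _ hxP
      have h2 := key _ (hmap hxP)
      calc ‖R (R (s_ m)) - s‖ ≤ ζ * ‖R (s_ m) - s‖ := h2
        _ ≤ ζ * (ζ * ‖s_ m - s‖) := by nlinarith
        _ = ζ^2 * ‖s_ m - s‖ := by ring
    have hRRu : ‖R (R ((1 - a m) • s_ m + (a m) • R (s_ m))) - s‖ ≤ ζ^2 * ‖s_ m - s‖ := by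
      have h1 := key _ huP
      have h2 := key _ (hmap huP)
      calc ‖R (R ((1 - a m) • s_ m + (a m) • R (s_ m))) - s‖
          ≤ ζ * ‖R ((1 - a m) • s_ m + (a m) • R (s_ m)) - s‖ := h2
        _ ≤ ζ * (ζ * ‖(1 - a m) • s_ m + (a m) • R (s_ m) - s‖) := by nlinarith
        _ ≤ ζ^2 * ‖s_ m - s‖ := by nlinarith
    have hbnorm : ‖b_ m - s‖ ≤ ζ^2 * ‖s_ m - s‖ := by
      rw [hb m, AT_half_sub]
      calc ‖(1/2:ℝ) • (R (R (s_ m)) - s) + (1/2:ℝ) • (R (R ((1 - a m) • s_ m + (a m) • R (s_ m))) - s)‖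
          ≤ ‖(1/2:ℝ) • (R (R (s_ m)) - s)‖ + ‖(1/2:ℝ) • (R (R ((1 - a m) • s_ m + (a m) • R (s_ m))) - s)‖ :=
            norm_add_le _ _
        _ = (1/2) * ‖R (R (s_ m)) - s‖ + (1/2) * ‖R (R ((1 - a m) • s_ m + (a m) • R (s_ m))) - s‖ := by
            rw [norm_smul, norm_smul]; norm_num
        _ ≤ ζ^2 * ‖s_ m - s‖ := by linarith
    have hv : ‖(1 - a m) • b_ m + (a m) • R (b_ m) - s‖ ≤ ‖b_ m - s‖ :=
      comb_norm hζ0' hζ1' (le_of_lt hc.1) (le_of_lt hc.2) (key _ hbP)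
    have hvP := memc _ hc _ hbP _ (hmap hbP)
    calc ‖s_ (m + 1) - s‖ = ‖R ((1 - a m) • b_ m + (a m) • R (b_ m)) - s‖ := by rw [hs m]
      _ ≤ ζ * ‖(1 - a m) • b_ m + (a m) • R (b_ m) - s‖ := key _ hvP
      _ ≤ ζ * (ζ^2 * ‖s_ m - s‖) := by nlinarith
      _ = ζ^3 * ‖s_ m - s‖ := by ring
  refine ⟨main, ?_⟩
  intro m
  induction m with
  | zero => simp
  | succ n ih =>
    calc ‖s_ (n + 1) - s‖ ≤ ζ ^ 3 * ‖s_ n - s‖ := main n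
      _ ≤ ζ ^ 3 * (ζ ^ (3 * n) * ‖s_ 0 - s‖) := by
          have : (0:ℝ) ≤ ζ ^ 3 := by positivity
          nlinarith
      _ = ζ ^ (3 * (n + 1)) * ‖s_ 0 - s‖ := by rw [← mul_assoc, ← pow_add]; ring_nf
end

section
/- Under the same hypotheses as the AT convergence theorem, the AT iteration sequence {s_m} converges strongly to the fixed point s of R. -/
private lemma comb_norm_s4 {Q : Type*} [NormedAddCommGroup Q] [NormedSpace ℝ Q]
    (a : ℝ) (ha0 : 0 ≤ a) (ha1 : a ≤ 1) (x y s : Q) :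
    ‖(1 - a) • x + a • y - s‖ ≤ (1 - a) * ‖x - s‖ + a * ‖y - s‖ := by
  have h : (1 - a) • x + a • y - s = (1 - a) • (x - s) + a • (y - s) := by
    simp [smul_sub, sub_smul]; abel
  rw [h]
  calc ‖(1 - a) • (x - s) + a • (y - s)‖
      ≤ ‖(1 - a) • (x - s)‖ + ‖a • (y - s)‖ := norm_add_le _ _
    _ = (1 - a) * ‖x - s‖ + a * ‖y - s‖ := by
        rw [norm_smul, norm_smul, Real.norm_eq_abs, Real.norm_eq_abs,
          abs_of_nonneg (by linarith), abs_of_nonneg ha0]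

theorem AT_iteration_converges
    {Q : Type*} [NormedAddCommGroup Q] [NormedSpace ℝ Q] [CompleteSpace Q]
    (P : Set Q) (hP : P.Nonempty) (hPc : IsClosed P) (hPconv : Convex ℝ P)
    (R : Q → Q) (hmap : Set.MapsTo R P P)
    (ζ L : ℝ) (hζ0 : 0 < ζ) (hζ1 : ζ < 1) (hL : 0 ≤ L)
    (hweak : ∀ p q, p ∈ P → q ∈ P → ‖R p - R q‖ ≤ ζ * ‖p - q‖ + L * ‖p - R p‖)
    (s : Q) (hsP : s ∈ P) (hfix : R s = s)
    (a : ℕ → ℝ) (ha : ∀ m, a m ∈ Set.Ioo (0 : ℝ) 1)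
    (s_ b_ : ℕ → Q) (hs0 : s_ 0 ∈ P)
    (hb : ∀ m, b_ m = (1/2 : ℝ) • R (R (s_ m)) +
      (1/2 : ℝ) • R (R ((1 - a m) • s_ m + (a m) • R (s_ m))))
    (hs : ∀ m, s_ (m + 1) = R ((1 - a m) • b_ m + (a m) • R (b_ m))) :
    Filter.Tendsto s_ Filter.atTop (nhds s) := by
  -- contraction towards s
  have hcon : ∀ p ∈ P, ‖R p - s‖ ≤ ζ * ‖p - s‖ := by
    intro p hp
    have := hweak s p hsP hp
    rw [hfix, sub_self, norm_zero, mul_zero, add_zero, norm_sub_rev s p] at this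
    rwa [norm_sub_rev] at this
  -- convex combination estimate with ζ-bounds on both
  have hcomb : ∀ (t : ℝ), 0 ≤ t → t ≤ 1 → ∀ (x y : Q) (d : ℝ), 0 ≤ d →
      ‖x - s‖ ≤ d → ‖y - s‖ ≤ d → ‖(1 - t) • x + t • y - s‖ ≤ d := by
    intro t ht0 ht1 x y d hd hx hy
    calc ‖(1 - t) • x + t • y - s‖ ≤ (1 - t) * ‖x - s‖ + t * ‖y - s‖ :=
          comb_norm_s4 t ht0 ht1 x y s
      _ ≤ (1 - t) * d + t * d := by
          gcongr <;> linarith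
      _ = d := by ring
  -- induction: membership and geometric bound
  have key : ∀ m, s_ m ∈ P ∧ ‖s_ m - s‖ ≤ ζ ^ m * ‖s_ 0 - s‖ := by
    intro m
    induction m with
    | zero => exact ⟨hs0, by simp⟩
    | succ m ih =>
      obtain ⟨hmem, hd⟩ := ih
      obtain ⟨ha0, ha1⟩ := ha m
      set d := ζ ^ m * ‖s_ 0 - s‖ with hddef
      have hd0 : 0 ≤ d := mul_nonneg (pow_nonneg hζ0.le _) (norm_nonneg _)
      -- t_m
      have htP : (1 - a m) • s_ m + a m • R (s_ m) ∈ P :=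
        hPconv hmem (hmap hmem) (by linarith) ha0.le (by ring)
      have hRsm : ‖R (s_ m) - s‖ ≤ d := by
        have := hcon _ hmem
        nlinarith [norm_nonneg (s_ m - s)]
      have htd : ‖(1 - a m) • s_ m + a m • R (s_ m) - s‖ ≤ d :=
        hcomb _ ha0.le ha1.le _ _ d hd0 hd hRsm
      -- R² bounds
      have hRR1 : ‖R (R (s_ m)) - s‖ ≤ ζ * d := by
        have h1 := hcon _ (hmap hmem)
        have h2 := hcon _ hmem
        nlinarith [norm_nonneg (R (s_ m) - s), mul_nonneg hζ0.le hd0]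
      have hRR2 : ‖R (R ((1 - a m) • s_ m + a m • R (s_ m))) - s‖ ≤ ζ * d := by
        have h1 := hcon _ (hmap htP)
        have h2 := hcon _ htP
        nlinarith [norm_nonneg (R ((1 - a m) • s_ m + a m • R (s_ m)) - s),
          mul_nonneg hζ0.le hd0]
      -- b_m
      have hbeq := hb m
      have hbP : b_ m ∈ P := by
        rw [hbeq]
        have := hPconv (hmap (hmap hmem)) (hmap (hmap htP))
          (by norm_num : (0:ℝ) ≤ 1/2) (by norm_num : (0:ℝ) ≤ 1/2) (by norm_num)
        simpa using this
      have hbd : ‖b_ m - s‖ ≤ ζ * d := by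
        rw [hbeq]
        have h := hcomb (1/2) (by norm_num) (by norm_num)
          (R (R (s_ m))) (R (R ((1 - a m) • s_ m + a m • R (s_ m))))
          (ζ * d) (mul_nonneg hζ0.le hd0) hRR1 hRR2
        have e : ((1 : ℝ) - 1/2) = 1/2 := by norm_num
        rw [e] at h
        exact h
      -- u_m
      have hRbd : ‖R (b_ m) - s‖ ≤ ζ * d := by
        have := hcon _ hbP
        nlinarith [norm_nonneg (b_ m - s)]
      have huP : (1 - a m) • b_ m + a m • R (b_ m) ∈ P :=
        hPconv hbP (hmap hbP) (by linarith) ha0.le (by ring)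
      have hud : ‖(1 - a m) • b_ m + a m • R (b_ m) - s‖ ≤ ζ * d :=
        hcomb _ ha0.le ha1.le _ _ (ζ * d) (mul_nonneg hζ0.le hd0) hbd hRbd
      refine ⟨by rw [hs m]; exact hmap huP, ?_⟩
      rw [hs m]
      have := hcon _ huP
      calc ‖R ((1 - a m) • b_ m + a m • R (b_ m)) - s‖
          ≤ ζ * ‖(1 - a m) • b_ m + a m • R (b_ m) - s‖ := this
        _ ≤ ζ * (ζ * d) := by gcongr
        _ ≤ ζ * d := by nlinarith [mul_nonneg hζ0.le hd0]
        _ = ζ ^ (m + 1) * ‖s_ 0 - s‖ := by rw [hddef, pow_succ]; ring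
  -- conclude
  rw [tendsto_iff_norm_sub_tendsto_zero]
  have hlim : Filter.Tendsto (fun m => ζ ^ m * ‖s_ 0 - s‖) Filter.atTop (nhds 0) := by
    have := (tendsto_pow_atTop_nhds_zero_of_lt_one hζ0.le hζ1).mul_const ‖s_ 0 - s‖
    simpa using this
  exact squeeze_zero (fun m => norm_nonneg _) (fun m => (key m).2) hlim
end

section
/- Let {p_m} be a sequence of nonnegative reals such that p_{m+1} ≤ (1 − δ_m)p_m + δ_m q_m for all m ≥ N, where δ_m ∈ (0,1), ∑ δ_m = ∞, and q_m ≥ 0 is bounded. Then limsup_{m→∞} p_m ≤ limsup_{m→∞} q_m. -/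
open Filter Finset

theorem lemma_limsup_estimate
    (p q δ : ℕ → ℝ) (N : ℕ)
    (hp : ∀ m, 0 ≤ p m) (hq : ∀ m, 0 ≤ q m)
    (hδ : ∀ m, δ m ∈ Set.Ioo (0 : ℝ) 1)
    (hdiv : Filter.Tendsto (fun n => ∑ i ∈ Finset.range n, δ i) Filter.atTop Filter.atTop)
    (hqbdd : ∃ C, ∀ m, q m ≤ C)
    (hrec : ∀ m, N ≤ m → p (m + 1) ≤ (1 - δ m) * p m + δ m * q m) :
    Filter.limsup p Filter.atTop ≤ Filter.limsup q Filter.atTop := by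
  obtain ⟨C, hC⟩ := hqbdd
  set L := Filter.limsup q Filter.atTop with hL
  have hqbd : IsBoundedUnder (· ≤ ·) atTop q := Filter.isBoundedUnder_of ⟨C, hC⟩
  have hpbelow : IsBoundedUnder (· ≥ ·) atTop p := Filter.isBoundedUnder_of ⟨0, hp⟩
  have hpcobdd : IsCoboundedUnder (· ≤ ·) atTop p := hpbelow.isCoboundedUnder_le
  refine le_of_forall_pos_le_add fun ε hε => ?_
  have h1 : ∀ᶠ m in atTop, q m < L + ε/2 :=
    Filter.eventually_lt_of_limsup_lt (by linarith) hqbd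
  obtain ⟨M0, hM0⟩ := Filter.eventually_atTop.mp h1
  set M := max M0 N with hM
  have hqM : ∀ m, M ≤ m → q m ≤ L + ε/2 :=
    fun m hm => (hM0 m (le_trans (le_max_left _ _) hm)).le
  set B := max (p M - (L + ε/2)) 0 with hB
  have hB0 : 0 ≤ B := le_max_right _ _
  set P : ℕ → ℝ := fun k => ∏ i ∈ range k, (1 - δ (M + i)) with hP
  have hPnn : ∀ k, 0 ≤ P k := by
    intro k
    apply Finset.prod_nonneg
    intro i _
    have := (hδ (M + i)).2
    linarith
  have key : ∀ k, p (M + k) ≤ L + ε/2 + B * P k := by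
    intro k
    induction k with
    | zero =>
      have : p M - (L + ε/2) ≤ B := le_max_left _ _
      simp only [hP, range_zero, prod_empty, Nat.add_zero, mul_one]
      linarith
    | succ k ih =>
      have hNk : N ≤ M + k := le_trans (le_max_right _ _) (Nat.le_add_right _ _)
      have hrec' := hrec (M + k) hNk
      have hd := hδ (M + k)
      have hq' := hqM (M + k) (Nat.le_add_right _ _)
      have hPk := hPnn k
      have hPsucc : P (k + 1) = P k * (1 - δ (M + k)) := by
        simp [hP, Finset.prod_range_succ]
      have h2 : p (M + (k + 1)) ≤ (1 - δ (M + k)) * p (M + k) + δ (M + k) * q (M + k) := by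
        have : M + (k + 1) = (M + k) + 1 := by ring
        rw [this]; exact hrec'
      have h3 : (1 - δ (M + k)) * p (M + k) ≤ (1 - δ (M + k)) * (L + ε/2 + B * P k) := by
        apply mul_le_mul_of_nonneg_left ih
        linarith [hd.2]
      have h4 : δ (M + k) * q (M + k) ≤ δ (M + k) * (L + ε/2) := by
        apply mul_le_mul_of_nonneg_left hq'
        linarith [hd.1]
      rw [hPsucc]
      nlinarith [hd.1, hd.2]
  have hsum : Filter.Tendsto (fun k => ∑ i ∈ range k, δ (M + i)) atTop atTop := by
    have heq : ∀ k, ∑ i ∈ range k, δ (M + i)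
        = (∑ i ∈ range (M + k), δ i) - ∑ i ∈ range M, δ i := by
      intro k
      rw [Finset.sum_range_add]
      ring
    have h5 : Filter.Tendsto (fun k => ∑ i ∈ range (M + k), δ i) atTop atTop := by
      exact hdiv.comp (Filter.tendsto_atTop_mono (fun k => Nat.le_add_left k M)
        Filter.tendsto_id)
    have h6 : Filter.Tendsto (fun k => (∑ i ∈ range (M + k), δ i) - ∑ i ∈ range M, δ i)
        atTop atTop :=
      (Filter.tendsto_atTop_add_const_right atTop (-(∑ i ∈ range M, δ i)) h5).congr
        fun k => (sub_eq_add_neg _ _).symm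
    exact h6.congr fun k => (heq k).symm
  have hPle : ∀ k, P k ≤ Real.exp (-(∑ i ∈ range k, δ (M + i))) := by
    intro k
    have h7 : P k ≤ ∏ i ∈ range k, Real.exp (-(δ (M + i))) := by
      apply Finset.prod_le_prod
      · intro i _
        have := (hδ (M + i)).2
        linarith
      · intro i _
        have h8 := Real.add_one_le_exp (-(δ (M + i)))
        linarith
    calc P k ≤ ∏ i ∈ range k, Real.exp (-(δ (M + i))) := h7
      _ = Real.exp (∑ i ∈ range k, -(δ (M + i))) := (Real.exp_sum _ _).symm
      _ = Real.exp (-(∑ i ∈ range k, δ (M + i))) := by rw [Finset.sum_neg_distrib]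
  have hP0 : Filter.Tendsto P atTop (nhds 0) := by
    apply squeeze_zero hPnn hPle
    exact Real.tendsto_exp_atBot.comp (Filter.tendsto_neg_atTop_atBot.comp hsum)
  have hBP : Filter.Tendsto (fun k => B * P k) atTop (nhds 0) := by
    simpa using hP0.const_mul B
  have hev : ∀ᶠ k in atTop, B * P k < ε/2 :=
    hBP.eventually_lt_const (by linarith)
  obtain ⟨K, hK⟩ := Filter.eventually_atTop.mp hev
  have hfinal : ∀ᶠ m in atTop, p m ≤ L + ε := by
    rw [Filter.eventually_atTop]
    refine ⟨M + K, fun m hm => ?_⟩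
    have hMm : M ≤ m := le_trans (Nat.le_add_right _ _) hm
    have hmk : m = M + (m - M) := by omega
    have hKk : K ≤ m - M := by omega
    have := key (m - M)
    have h9 := hK (m - M) hKk
    rw [← hmk] at this
    linarith
  exact Filter.limsup_le_of_le hpcobdd hfinal
end

section
/- The AT iterative algorithm is almost R-stable for weak contractions: if {r_m} is any sequence in P and γ_m = ‖r_{m+1} − g(R, r_m)‖ where g(R, r) denotes one step of the AT iteration starting from r, then ∑ γ_m < ∞ implies r_m → s, the fixed point of R. -/
private lemma comb_norm_s8 {Q : Type*} [NormedAddCommGroup Q] [NormedSpace ℝ Q]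
    (t : ℝ) (h0 : 0 ≤ t) (h1 : t ≤ 1) (u v s : Q) :
    ‖(1 - t) • u + t • v - s‖ ≤ (1 - t) * ‖u - s‖ + t * ‖v - s‖ := by
  have h : (1 - t) • u + t • v - s = (1 - t) • (u - s) + t • (v - s) := by module
  rw [h]
  refine (norm_add_le _ _).trans ?_
  rw [norm_smul, norm_smul, Real.norm_eq_abs, Real.norm_eq_abs,
    abs_of_nonneg (by linarith), abs_of_nonneg h0]

private lemma rec_tendsto_zero (c : ℝ) (hc0 : 0 ≤ c) (hc1 : c < 1)
    (x γ : ℕ → ℝ) (hx0 : ∀ n, 0 ≤ x n) (hγ0 : ∀ n, 0 ≤ γ n)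
    (hsum : Summable γ) (hrec : ∀ n, x (n + 1) ≤ c * x n + γ n) :
    Filter.Tendsto x Filter.atTop (nhds 0) := by
  have key : ∀ N n, x (N + n) ≤ c ^ n * x N + ∑ k ∈ Finset.range n, γ (N + k) := by
    intro N n
    induction n with
    | zero => simp
    | succ n ih =>
      have hS : 0 ≤ ∑ k ∈ Finset.range n, γ (N + k) :=
        Finset.sum_nonneg fun k _ => hγ0 _
      calc x (N + (n + 1)) ≤ c * x (N + n) + γ (N + n) := hrec _
        _ ≤ c * (c ^ n * x N + ∑ k ∈ Finset.range n, γ (N + k)) + γ (N + n) := by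
            nlinarith [hrec (N + n)]
        _ ≤ c ^ (n + 1) * x N + ∑ k ∈ Finset.range (n + 1), γ (N + k) := by
            rw [Finset.sum_range_succ]
            have : c * ∑ k ∈ Finset.range n, γ (N + k) ≤ ∑ k ∈ Finset.range n, γ (N + k) := by
              nlinarith
            ring_nf
            nlinarith
  have htail : Filter.Tendsto (fun N => ∑' k, γ (k + N)) Filter.atTop (nhds 0) :=
    tendsto_sum_nat_add γ
  rw [Metric.tendsto_atTop]
  intro ε hε
  obtain ⟨N, hN⟩ := (Metric.tendsto_atTop.mp htail) (ε / 2) (by linarith)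
  have hTN : ∑' k, γ (k + N) < ε / 2 := by
    have := hN N le_rfl
    rw [Real.dist_eq, sub_zero] at this
    exact (le_abs_self _).trans_lt this
  have hpow : Filter.Tendsto (fun n => c ^ n * x N) Filter.atTop (nhds 0) := by
    simpa using (tendsto_pow_atTop_nhds_zero_of_lt_one hc0 hc1).mul_const (x N)
  obtain ⟨M, hM⟩ := (Metric.tendsto_atTop.mp hpow) (ε / 2) (by linarith)
  refine ⟨N + M, fun m hm => ?_⟩
  have hxm : x m ≤ c ^ (m - N) * x N + ∑' k, γ (k + N) := by
    have h1 := key N (m - N)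
    rw [Nat.add_sub_cancel' (le_trans (Nat.le_add_right N M) hm)] at h1
    refine h1.trans (add_le_add_right ?_ _)
    have hsum' : Summable (fun k => γ (k + N)) := (summable_nat_add_iff N).mpr hsum
    calc ∑ k ∈ Finset.range (m - N), γ (N + k)
        = ∑ k ∈ Finset.range (m - N), γ (k + N) := by
          apply Finset.sum_congr rfl; intro k _; rw [Nat.add_comm]
      _ ≤ ∑' k, γ (k + N) := Summable.sum_le_tsum _ (fun k _ => hγ0 _) hsum'
  have hMm : M ≤ m - N := by omega
  have hc := hM (m - N) hMm
  rw [Real.dist_eq, sub_zero] at hc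
  have hcle : c ^ (m - N) * x N < ε / 2 := (le_abs_self _).trans_lt hc
  rw [Real.dist_eq, sub_zero, abs_of_nonneg (hx0 m)]
  linarith

theorem AT_iteration_almost_stable
    {Q : Type*} [NormedAddCommGroup Q] [NormedSpace ℝ Q] [CompleteSpace Q]
    (P : Set Q) (hP : P.Nonempty) (hPc : IsClosed P) (hPconv : Convex ℝ P)
    (R : Q → Q) (hmap : Set.MapsTo R P P)
    (ζ L : ℝ) (hζ0 : 0 < ζ) (hζ1 : ζ < 1) (hL : 0 ≤ L)
    (hweak : ∀ p q, p ∈ P → q ∈ P → ‖R p - R q‖ ≤ ζ * ‖p - q‖ + L * ‖p - R p‖)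
    (s : Q) (hsP : s ∈ P) (hfix : R s = s)
    (a : ℕ → ℝ) (ha : ∀ m, a m ∈ Set.Ioo (0 : ℝ) 1)
    (r b g : ℕ → Q) (hr : ∀ m, r m ∈ P)
    (hb : ∀ m, b m = (1/2 : ℝ) • R (R (r m)) +
      (1/2 : ℝ) • R (R ((1 - a m) • r m + (a m) • R (r m))))
    (hg : ∀ m, g m = R ((1 - a m) • b m + (a m) • R (b m)))
    (γ : ℕ → ℝ) (hγ : ∀ m, γ m = ‖r (m + 1) - g m‖)
    (hsum : Summable γ) :
    Filter.Tendsto r Filter.atTop (nhds s) := by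
  -- contraction toward s
  have hcontr : ∀ q ∈ P, ‖R q - s‖ ≤ ζ * ‖q - s‖ := by
    intro q hq
    have h := hweak s q hsP hq
    rw [hfix, sub_self, norm_zero, mul_zero, add_zero, norm_sub_rev,
      norm_sub_rev s q] at h
    exact h
  -- membership of the convex combination
  have hcomb_mem : ∀ (t : ℝ), 0 < t → t < 1 → ∀ u ∈ P, ∀ v ∈ P,
      (1 - t) • u + t • v ∈ P := fun t ht0 ht1 u hu v hv =>
    hPconv hu hv (by linarith) (le_of_lt ht0) (by ring)
  -- main estimate: ‖g m - s‖ ≤ ζ^3 * ‖r m - s‖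
  have hgest : ∀ m, ‖g m - s‖ ≤ ζ ^ 3 * ‖r m - s‖ := by
    intro m
    obtain ⟨ham0, ham1⟩ := ha m
    set t := a m
    have hrm := hr m
    have hRrm : R (r m) ∈ P := hmap hrm
    have hq1 : (1 - t) • r m + t • R (r m) ∈ P := hcomb_mem t ham0 ham1 _ hrm _ hRrm
    have hx0 : (0:ℝ) ≤ ‖r m - s‖ := norm_nonneg _
    -- ‖q1 - s‖ ≤ ‖r m - s‖
    have hq1n : ‖(1 - t) • r m + t • R (r m) - s‖ ≤ ‖r m - s‖ := by
      have h1 := comb_norm_s8 t (le_of_lt ham0) (le_of_lt ham1) (r m) (R (r m)) s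
      have h2 := hcontr (r m) hrm
      nlinarith [mul_le_mul_of_nonneg_left h2 ham0.le,
        mul_nonneg (mul_nonneg ham0.le (sub_nonneg.mpr hζ1.le)) hx0]
    have hu : R (R (r m)) ∈ P := hmap hRrm
    have hun : ‖R (R (r m)) - s‖ ≤ ζ ^ 2 * ‖r m - s‖ := by
      have h1 := hcontr (R (r m)) hRrm
      have h2 := hcontr (r m) hrm
      nlinarith [mul_le_mul_of_nonneg_left h2 ham0.le,
        mul_nonneg (mul_nonneg ham0.le (sub_nonneg.mpr hζ1.le)) hx0]
    have hv : R (R ((1 - t) • r m + t • R (r m))) ∈ P := hmap (hmap hq1)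
    have hvn : ‖R (R ((1 - t) • r m + t • R (r m))) - s‖ ≤ ζ ^ 2 * ‖r m - s‖ := by
      have h1 := hcontr _ (hmap hq1)
      have h2 := hcontr _ hq1
      nlinarith
    have hbm : b m ∈ P := by
      rw [hb m]
      exact hPconv hu hv (by norm_num) (by norm_num) (by norm_num)
    have hbn : ‖b m - s‖ ≤ ζ ^ 2 * ‖r m - s‖ := by
      rw [hb m]
      have h1 := comb_norm_s8 (1/2) (by norm_num) (by norm_num)
        (R (R (r m))) (R (R ((1 - t) • r m + t • R (r m)))) s
      norm_num at h1
      linarith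
    have hRb : R (b m) ∈ P := hmap hbm
    have hq2 : (1 - t) • b m + t • R (b m) ∈ P := hcomb_mem t ham0 ham1 _ hbm _ hRb
    have hq2n : ‖(1 - t) • b m + t • R (b m) - s‖ ≤ ζ ^ 2 * ‖r m - s‖ := by
      have h1 := comb_norm_s8 t (le_of_lt ham0) (le_of_lt ham1) (b m) (R (b m)) s
      have h2 := hcontr (b m) hbm
      nlinarith [mul_le_mul_of_nonneg_left h2 ham0.le,
        mul_nonneg (mul_nonneg ham0.le (sub_nonneg.mpr hζ1.le)) (norm_nonneg (b m - s)),
        norm_nonneg (b m - s)]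
    rw [hg m]
    have h3 := hcontr _ hq2
    nlinarith
  -- recursive inequality
  have hrec : ∀ m, ‖r (m + 1) - s‖ ≤ ζ ^ 3 * ‖r m - s‖ + γ m := by
    intro m
    calc ‖r (m + 1) - s‖ ≤ ‖r (m + 1) - g m‖ + ‖g m - s‖ := by
          have := norm_add_le (r (m + 1) - g m) (g m - s)
          simpa using this
      _ ≤ ζ ^ 3 * ‖r m - s‖ + γ m := by
          rw [hγ m]; linarith [hgest m]
  have hc0 : (0:ℝ) ≤ ζ ^ 3 := by positivity
  have hc1 : ζ ^ 3 < 1 := pow_lt_one₀ hζ0.le hζ1 (by norm_num)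
  have hten : Filter.Tendsto (fun m => ‖r m - s‖) Filter.atTop (nhds 0) :=
    rec_tendsto_zero (ζ ^ 3) hc0 hc1 _ γ (fun n => norm_nonneg _)
      (fun n => by rw [hγ n]; exact norm_nonneg _) hsum hrec
  rw [tendsto_iff_norm_sub_tendsto_zero]
  exact hten
end

section
/- For the F* iteration s_{m+1} = R(b_m), b_m = R((1−a_m)s_m + a_m R s_m) applied to a weak contraction R with fixed point s and constant ζ ∈ (0,1), one has ‖s_{m+1} − s‖ ≤ ζ²‖s_m − s‖ for all m, hence ‖s_m − s‖ ≤ ζ^{2m}‖s_0 − s‖. -/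
theorem Fstar_iteration_estimate
    {Q : Type*} [NormedAddCommGroup Q] [NormedSpace ℝ Q] [CompleteSpace Q]
    (P : Set Q) (hP : P.Nonempty) (hPc : IsClosed P) (hPconv : Convex ℝ P)
    (R : Q → Q) (hmap : Set.MapsTo R P P)
    (ζ L : ℝ) (hζ0 : 0 < ζ) (hζ1 : ζ < 1) (hL : 0 ≤ L)
    (hweak : ∀ p q, p ∈ P → q ∈ P → ‖R p - R q‖ ≤ ζ * ‖p - q‖ + L * ‖p - R p‖)
    (s : Q) (hsP : s ∈ P) (hfix : R s = s)
    (a : ℕ → ℝ) (ha : ∀ m, a m ∈ Set.Ioo (0 : ℝ) 1)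
    (s_ : ℕ → Q) (hs0 : s_ 0 ∈ P)
    (hs : ∀ m, s_ (m + 1) = R (R ((1 - a m) • s_ m + (a m) • R (s_ m)))) :
    (∀ m, ‖s_ (m + 1) - s‖ ≤ ζ ^ 2 * ‖s_ m - s‖) ∧
    (∀ m, ‖s_ m - s‖ ≤ ζ ^ (2 * m) * ‖s_ 0 - s‖) := by
  -- key contraction toward s
  have key : ∀ x ∈ P, ‖R x - s‖ ≤ ζ * ‖x - s‖ := by
    intro x hx
    have h := hweak s x hsP hx
    rw [hfix, sub_self, norm_zero, mul_zero, add_zero] at h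
    calc ‖R x - s‖ = ‖s - R x‖ := norm_sub_rev _ _
    _ ≤ ζ * ‖s - x‖ := h
    _ = ζ * ‖x - s‖ := by rw [norm_sub_rev]
  have conv : ∀ m, s_ m ∈ P → (1 - a m) • s_ m + (a m) • R (s_ m) ∈ P := by
    intro m hm
    exact hPconv hm (hmap hm) (by linarith [(ha m).2]) (le_of_lt (ha m).1) (by ring)
  have mem : ∀ m, s_ m ∈ P := by
    intro m
    induction m with
    | zero => exact hs0
    | succ n ih => rw [hs n]; exact hmap (hmap (conv n ih))
  have step : ∀ m, ‖s_ (m + 1) - s‖ ≤ ζ ^ 2 * ‖s_ m - s‖ := by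
    intro m
    have hy : (1 - a m) • s_ m + (a m) • R (s_ m) ∈ P := conv m (mem m)
    have h1 : ‖s_ (m + 1) - s‖ ≤ ζ * ‖R ((1 - a m) • s_ m + (a m) • R (s_ m)) - s‖ := by
      rw [hs m]; exact key _ (hmap hy)
    have h2 : ‖R ((1 - a m) • s_ m + (a m) • R (s_ m)) - s‖ ≤
        ζ * ‖(1 - a m) • s_ m + (a m) • R (s_ m) - s‖ := key _ hy
    have h3 : ‖(1 - a m) • s_ m + (a m) • R (s_ m) - s‖ ≤ ‖s_ m - s‖ := by
      have heq : (1 - a m) • s_ m + (a m) • R (s_ m) - s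
          = (1 - a m) • (s_ m - s) + (a m) • (R (s_ m) - s) := by
        simp [smul_sub, sub_smul, one_smul]; abel
      rw [heq]
      calc ‖(1 - a m) • (s_ m - s) + (a m) • (R (s_ m) - s)‖
          ≤ ‖(1 - a m) • (s_ m - s)‖ + ‖(a m) • (R (s_ m) - s)‖ := norm_add_le _ _
        _ = (1 - a m) * ‖s_ m - s‖ + a m * ‖R (s_ m) - s‖ := by
            rw [norm_smul, norm_smul, Real.norm_eq_abs, Real.norm_eq_abs,
              abs_of_nonneg (by linarith [(ha m).2]), abs_of_nonneg (le_of_lt (ha m).1)]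
        _ ≤ (1 - a m) * ‖s_ m - s‖ + a m * (ζ * ‖s_ m - s‖) := by
            have := key _ (mem m)
            nlinarith [(ha m).1]
        _ ≤ ‖s_ m - s‖ := by nlinarith [mul_nonneg (mul_nonneg (le_of_lt (ha m).1) (by linarith : (0:ℝ) ≤ 1 - ζ)) (norm_nonneg (s_ m - s))]
    calc ‖s_ (m + 1) - s‖ ≤ ζ * (ζ * ‖(1 - a m) • s_ m + (a m) • R (s_ m) - s‖) :=
          h1.trans (by nlinarith)
      _ ≤ ζ ^ 2 * ‖s_ m - s‖ := by nlinarith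
  refine ⟨step, ?_⟩
  intro m
  induction m with
  | zero => simp
  | succ n ih =>
    calc ‖s_ (n + 1) - s‖ ≤ ζ ^ 2 * ‖s_ n - s‖ := step n
      _ ≤ ζ ^ 2 * (ζ ^ (2 * n) * ‖s_ 0 - s‖) := by nlinarith [pow_pos hζ0 2]
      _ = ζ ^ (2 * (n + 1)) * ‖s_ 0 - s‖ := by rw [show 2 * (n + 1) = 2 + 2 * n by ring, pow_add]; ring
end
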